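/- Let (α, 𝒜) be a measurable space, 𝒯 a countable family of partial Borel automorphisms of α that is closed under inversion and under composition (restricted to the set where the composition is defined), and ν a finite measure on α quasi-invariant under 𝒯. Then there exists a measurable set X₀ ⊆ α with ν(α \ X₀) = 0, saturated under 𝒯, such that for every x ∈ X₀ and every τ : S → S' in 𝒯 with x ∈ S and τ(x) = x, one has d[τ_*ν]/dν(x) = 1. -/

import Mathlib

open MeasureTheory Set

/-- A partial Borel automorphism of a measurable space `α`: a bijection
`τ : source → target` between measurable subsets of `α`, measurable with
measurable inverse. -/
structure PartialBorelAut (α : Type*) [MeasurableSpace α] where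
  source : Set α
  target : Set α
  toFun : α → α
  invFun : α → α
  source_measurable : MeasurableSet source
  target_measurable : MeasurableSet target
  mapsTo : MapsTo toFun source target
  inv_mapsTo : MapsTo invFun target source
  left_inv : ∀ x ∈ source, invFun (toFun x) = x
  right_inv : ∀ y ∈ target, toFun (invFun y) = y
  measurable_image : ∀ A : Set α, MeasurableSet A → A ⊆ source → MeasurableSet (toFun '' A)
  measurable_image_inv : ∀ A : Set α, MeasurableSet A → A ⊆ target → MeasurableSet (invFun '' A)

namespace PartialBorelAut

variable {α : Type*} [MeasurableSpace α]

theorem injOn_invFun (τ : PartialBorelAut α) : InjOn τ.invFun τ.target := by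
  intro a ha b hb h
  have h' := congrArg τ.toFun h
  rwa [τ.right_inv a ha, τ.right_inv b hb] at h'

/-- The pushforward `τ_*ν` under a partial Borel automorphism `τ` of (the restriction to
the source of) a measure `ν`: it is the measure `A ↦ ν (τ⁻¹ (A ∩ target))`, carried by
the target of `τ`. -/
noncomputable def pushforward (τ : PartialBorelAut α) (ν : Measure α) : Measure α :=
  Measure.ofMeasurable (fun A _ => ν (τ.invFun '' (A ∩ τ.target)))
    (by simp)
    (by
      intro f hf hdisj
      have himg : ∀ i, MeasurableSet (τ.invFun '' (f i ∩ τ.target)) := fun i =>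
        τ.measurable_image_inv _ ((hf i).inter τ.target_measurable) inter_subset_right
      have hdisj' : Pairwise (Function.onFun Disjoint fun i => τ.invFun '' (f i ∩ τ.target)) := by
        intro i j hij
        refine Set.disjoint_left.2 ?_
        rintro z ⟨a, ⟨haf, hat⟩, rfl⟩ ⟨b, ⟨hbf, hbt⟩, hba⟩
        have hab : b = a := τ.injOn_invFun hbt hat hba
        exact Set.disjoint_left.1 (hdisj hij) haf (hab ▸ hbf)
      calc ν (τ.invFun '' ((⋃ i, f i) ∩ τ.target))
          = ν (⋃ i, τ.invFun '' (f i ∩ τ.target)) := by rw [iUnion_inter, image_iUnion]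
        _ = ∑' i, ν (τ.invFun '' (f i ∩ τ.target)) := measure_iUnion hdisj' himg)

/-- The inverse of a partial Borel automorphism. -/
def symm (τ : PartialBorelAut α) : PartialBorelAut α where
  source := τ.target
  target := τ.source
  toFun := τ.invFun
  invFun := τ.toFun
  source_measurable := τ.target_measurable
  target_measurable := τ.source_measurable
  mapsTo := τ.inv_mapsTo
  inv_mapsTo := τ.mapsTo
  left_inv := τ.right_inv
  right_inv := τ.left_inv
  measurable_image := τ.measurable_image_inv
  measurable_image_inv := τ.measurable_image

end PartialBorelAut

/-- Quasi-invariance of a measure under a family of partial Borel automorphisms. -/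
def QuasiInvariant {α : Type*} [MeasurableSpace α]
    (𝒯 : Set (PartialBorelAut α)) (ν : Measure α) : Prop :=
  ∀ τ ∈ 𝒯, ∀ A : Set α, MeasurableSet A → A ⊆ τ.source → (ν A = 0 ↔ ν (τ.toFun '' A) = 0)

/-- Saturation of a set under a family of partial Borel automorphisms. -/
def Saturated {α : Type*} [MeasurableSpace α]
    (𝒯 : Set (PartialBorelAut α)) (Y : Set α) : Prop :=
  ∀ τ ∈ 𝒯, τ.toFun '' (Y ∩ τ.source) ⊆ Y ∧ τ.invFun '' (Y ∩ τ.target) ⊆ Y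

/-- The family `𝒯` is closed under inversion. -/
def ClosedUnderInv {α : Type*} [MeasurableSpace α] (𝒯 : Set (PartialBorelAut α)) : Prop :=
  ∀ τ ∈ 𝒯, τ.symm ∈ 𝒯

/-- The family `𝒯` is closed under composition, restricted to the set where the
composition is defined. -/
def ClosedUnderComp {α : Type*} [MeasurableSpace α] (𝒯 : Set (PartialBorelAut α)) : Prop :=
  ∀ τ₁ ∈ 𝒯, ∀ τ₂ ∈ 𝒯, ∃ σ ∈ 𝒯,
    σ.source = {x ∈ τ₁.source | τ₁.toFun x ∈ τ₂.source} ∧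
    ∀ x ∈ σ.source, σ.toFun x = τ₂.toFun (τ₁.toFun x)


namespace GhysAux

open PartialBorelAut ENNReal NNReal

variable {α : Type*} [MeasurableSpace α]

theorem pushforward_apply (τ : PartialBorelAut α) (ν : Measure α) {A : Set α}
    (hA : MeasurableSet A) :
    τ.pushforward ν A = ν (τ.invFun '' (A ∩ τ.target)) :=
  Measure.ofMeasurable_apply A hA

theorem pushforward_finite (τ : PartialBorelAut α) (ν : Measure α) [IsFiniteMeasure ν] :
    IsFiniteMeasure (τ.pushforward ν) := by
  constructor
  rw [pushforward_apply τ ν MeasurableSet.univ]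
  exact (measure_mono (subset_univ _)).trans_lt (measure_lt_top ν _)

theorem pushforward_ac {𝒯 : Set (PartialBorelAut α)} {ν : Measure α}
    (hqi : QuasiInvariant 𝒯 ν) {τ : PartialBorelAut α} (hτ : τ ∈ 𝒯) :
    τ.pushforward ν ≪ ν := by
  refine Measure.AbsolutelyContinuous.mk fun B hB hB0 => ?_
  rw [pushforward_apply τ ν hB]
  set A₀ := τ.invFun '' (B ∩ τ.target) with hA₀
  have hA₀m : MeasurableSet A₀ :=
    τ.measurable_image_inv _ (hB.inter τ.target_measurable) inter_subset_right
  have hA₀s : A₀ ⊆ τ.source :=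
    (image_mono inter_subset_right).trans τ.inv_mapsTo.image_subset
  have himg : τ.toFun '' A₀ = B ∩ τ.target := by
    ext y
    constructor
    · rintro ⟨_, ⟨z, hz, rfl⟩, rfl⟩
      rwa [τ.right_inv z hz.2]
    · intro hy
      exact ⟨τ.invFun y, ⟨y, hy, rfl⟩, τ.right_inv y hy.2⟩
  have h := hqi τ hτ A₀ hA₀m hA₀s
  rw [himg] at h
  exact h.mpr (measure_mono_null inter_subset_left hB0)

/-- Core hull construction: for any measurable `G` there is a measurable set `A ⊆ G`
containing all fixed points of `τ` in `G`, on which pushforward and `ν` agree. -/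
theorem core (τ : PartialBorelAut α) (ν : Measure α) {G : Set α} (hG : MeasurableSet G) :
    ∃ A : Set α, MeasurableSet A ∧ A ⊆ G ∧
      {x | x ∈ τ.source ∧ τ.toFun x = x ∧ x ∈ G} ⊆ A ∧
      τ.pushforward ν A = ν A := by
  set C := {x | x ∈ τ.source ∧ τ.toFun x = x ∧ x ∈ G} with hCdef
  set H := toMeasurable ν C ∩ (τ.source ∩ (τ.target ∩ G)) with hHdef
  have hHm : MeasurableSet H :=
    (measurableSet_toMeasurable ν C).inter
      (τ.source_measurable.inter (τ.target_measurable.inter hG))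
  have hCH : C ⊆ H := fun x hx =>
    ⟨subset_toMeasurable ν C hx, hx.1, by rw [← hx.2.1]; exact τ.mapsTo hx.1, hx.2.2⟩
  have hHsrc : H ⊆ τ.source := fun x hx => hx.2.1
  have hHtgt : H ⊆ τ.target := fun x hx => hx.2.2.1
  have hνH : ν H = ν C :=
    le_antisymm (by rw [← measure_toMeasurable (s := C)]; exact measure_mono inter_subset_left)
      (measure_mono hCH)
  set A := H ∩ (τ.toFun '' H) with hAdef
  have hAm : MeasurableSet A := hHm.inter (τ.measurable_image H hHm hHsrc)
  have hCA : C ⊆ A := fun x hx => ⟨hCH hx, ⟨x, hCH hx, hx.2.1⟩⟩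
  have hνA : ν A = ν C :=
    le_antisymm (hνH ▸ measure_mono inter_subset_left) (measure_mono hCA)
  have hinv_sub : τ.invFun '' (A ∩ τ.target) ⊆ H := by
    rintro _ ⟨x, ⟨⟨hxH, ⟨w, hwH, rfl⟩⟩, -⟩, rfl⟩
    rw [τ.left_inv w (hHsrc hwH)]
    exact hwH
  have hC_inv : C ⊆ τ.invFun '' (A ∩ τ.target) := by
    intro x hx
    refine ⟨x, ⟨hCA hx, hHtgt (hCH hx)⟩, ?_⟩
    calc τ.invFun x = τ.invFun (τ.toFun x) := by rw [hx.2.1]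
      _ = x := τ.left_inv x hx.1
  have hμA : τ.pushforward ν A = ν C := by
    rw [pushforward_apply τ ν hAm]
    exact le_antisymm (hνH ▸ measure_mono hinv_sub) (measure_mono hC_inv)
  exact ⟨A, hAm, fun x hx => hx.1.2.2.2, hCA, by rw [hμA, hνA]⟩

theorem exists_badset (ν : Measure α) [IsFiniteMeasure ν]
    {𝒯 : Set (PartialBorelAut α)} (hqi : QuasiInvariant 𝒯 ν)
    {τ : PartialBorelAut α} (hτ : τ ∈ 𝒯) :
    ∃ N : Set α, MeasurableSet N ∧ ν N = 0 ∧
      ∀ x ∈ τ.source, τ.toFun x = x → (τ.pushforward ν).rnDeriv ν x ≠ 1 → x ∈ N := by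
  classical
  set μ := τ.pushforward ν with hμdef
  haveI : IsFiniteMeasure μ := pushforward_finite τ ν
  set f := μ.rnDeriv ν with hfdef
  have hfm : Measurable f := Measure.measurable_rnDeriv μ ν
  have hac : μ ≪ ν := pushforward_ac hqi hτ
  have hwd : ν.withDensity f = μ := Measure.withDensity_rnDeriv_eq μ ν hac
  have hlow : ∀ r : ℝ≥0∞, r < 1 →
      ν {x | x ∈ τ.source ∧ τ.toFun x = x ∧ f x ≤ r} = 0 := by
    intro r hr
    have hG : MeasurableSet {x | f x ≤ r} := hfm measurableSet_Iic
    obtain ⟨A, hAm, hAG, hCA, hμν⟩ := core τ ν hG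
    have hμint : μ A = ∫⁻ x in A, f x ∂ν := by rw [← hwd, withDensity_apply f hAm]
    have hle : ∫⁻ x in A, f x ∂ν ≤ r * ν A := by
      calc ∫⁻ x in A, f x ∂ν ≤ ∫⁻ _ in A, r ∂ν :=
            setLIntegral_mono' hAm fun x hx => hAG hx
        _ = r * ν A := setLIntegral_const A r
    by_contra hC0
    have hA0 : ν A ≠ 0 := fun h => hC0 (measure_mono_null hCA h)
    have hcontr : ν A < ν A := by
      calc ν A = μ A := hμν.symm
        _ ≤ r * ν A := hμint ▸ hle
        _ < 1 * ν A := ENNReal.mul_lt_mul_left hA0 (measure_ne_top ν A) hr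
        _ = ν A := one_mul _
    exact absurd hcontr (lt_irrefl _)
  have hhigh : ∀ r : ℝ≥0∞, 1 < r → r ≠ ⊤ →
      ν {x | x ∈ τ.source ∧ τ.toFun x = x ∧ r ≤ f x} = 0 := by
    intro r hr hrt
    have hG : MeasurableSet {x | r ≤ f x} := hfm measurableSet_Ici
    obtain ⟨A, hAm, hAG, hCA, hμν⟩ := core τ ν hG
    have hμint : μ A = ∫⁻ x in A, f x ∂ν := by rw [← hwd, withDensity_apply f hAm]
    have hge : r * ν A ≤ ∫⁻ x in A, f x ∂ν := by
      calc r * ν A = ∫⁻ _ in A, r ∂ν := (setLIntegral_const A r).symm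
        _ ≤ ∫⁻ x in A, f x ∂ν := setLIntegral_mono' hAm fun x hx => hAG hx
    by_contra hC0
    have hA0 : ν A ≠ 0 := fun h => hC0 (measure_mono_null hCA h)
    have hcontr : ν A < ν A := by
      calc ν A = 1 * ν A := (one_mul _).symm
        _ < r * ν A := ENNReal.mul_lt_mul_left hA0 (measure_ne_top ν A) hr
        _ ≤ μ A := hμint ▸ hge
        _ = ν A := hμν
    exact absurd hcontr (lt_irrefl _)
  refine ⟨(⋃ q : ℚ, toMeasurable ν {x | x ∈ τ.source ∧ τ.toFun x = x ∧
        f x ≤ ((Real.toNNReal q : ℝ≥0∞)) ∧ ((Real.toNNReal q : ℝ≥0∞) < 1)}) ∪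
      (⋃ q : ℚ, toMeasurable ν {x | x ∈ τ.source ∧ τ.toFun x = x ∧
        ((Real.toNNReal q : ℝ≥0∞)) ≤ f x ∧ (1 < (Real.toNNReal q : ℝ≥0∞))}),
    ?_, ?_, ?_⟩
  · exact ((MeasurableSet.iUnion fun q => measurableSet_toMeasurable ν _).union
      (MeasurableSet.iUnion fun q => measurableSet_toMeasurable ν _))
  · refine measure_union_null (measure_iUnion_null fun q => ?_) (measure_iUnion_null fun q => ?_)
    · rw [measure_toMeasurable]
      by_cases hq : ((Real.toNNReal q : ℝ≥0∞) < 1)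
      · refine measure_mono_null (fun x hx => ?_) (hlow _ hq)
        exact ⟨hx.1, hx.2.1, hx.2.2.1⟩
      · have : {x | x ∈ τ.source ∧ τ.toFun x = x ∧
            f x ≤ ((Real.toNNReal q : ℝ≥0∞)) ∧ ((Real.toNNReal q : ℝ≥0∞) < 1)} = ∅ := by
          ext x; simp only [mem_setOf_eq, mem_empty_iff_false, iff_false]
          rintro ⟨-, -, -, h⟩; exact hq h
        rw [this]; exact measure_empty
    · rw [measure_toMeasurable]
      by_cases hq : (1 < (Real.toNNReal q : ℝ≥0∞))
      · refine measure_mono_null (fun x hx => ?_) (hhigh _ hq ENNReal.coe_ne_top)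
        exact ⟨hx.1, hx.2.1, hx.2.2.1⟩
      · have : {x | x ∈ τ.source ∧ τ.toFun x = x ∧
            ((Real.toNNReal q : ℝ≥0∞)) ≤ f x ∧ (1 < (Real.toNNReal q : ℝ≥0∞))} = ∅ := by
          ext x; simp only [mem_setOf_eq, mem_empty_iff_false, iff_false]
          rintro ⟨-, -, -, h⟩; exact hq h
        rw [this]; exact measure_empty
  · intro x hxs hfix hne
    rcases lt_or_gt_of_ne hne with hlt | hgt
    · obtain ⟨q, -, h1, h2⟩ := ENNReal.lt_iff_exists_rat_btwn.mp hlt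
      exact Or.inl (mem_iUnion.2 ⟨q, subset_toMeasurable ν _ ⟨hxs, hfix, le_of_lt h1, h2⟩⟩)
    · obtain ⟨q, -, h1, h2⟩ := ENNReal.lt_iff_exists_rat_btwn.mp hgt
      exact Or.inr (mem_iUnion.2 ⟨q, subset_toMeasurable ν _ ⟨hxs, hfix, le_of_lt h2, h1⟩⟩)

end GhysAux

/-- **Ghys' lemma.** For a finite measure `ν` quasi-invariant under a countable family `𝒯`
of partial Borel automorphisms closed under inversion and composition, there is a
measurable saturated set `X₀` of full measure such that every `τ ∈ 𝒯` fixing a point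
`x ∈ X₀` of its source has Radon–Nikodym derivative `d[τ_*ν]/dν (x) = 1` there. -/
theorem ghys_lemma
    {α : Type*} [MeasurableSpace α] (ν : Measure α) [IsFiniteMeasure ν]
    (𝒯 : Set (PartialBorelAut α)) (hcount : 𝒯.Countable)
    (hinv : ClosedUnderInv 𝒯) (hcomp : ClosedUnderComp 𝒯)
    (hqi : QuasiInvariant 𝒯 ν) :
    ∃ X₀ : Set α, MeasurableSet X₀ ∧ ν X₀ᶜ = 0 ∧ Saturated 𝒯 X₀ ∧
      ∀ x ∈ X₀, ∀ τ ∈ 𝒯, x ∈ τ.source → τ.toFun x = x →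
        (τ.pushforward ν).rnDeriv ν x = 1 := by
  classical
  have hbad : ∀ τ : PartialBorelAut α, ∃ N : Set α, MeasurableSet N ∧ ν N = 0 ∧
      (τ ∈ 𝒯 → ∀ x ∈ τ.source, τ.toFun x = x →
        (τ.pushforward ν).rnDeriv ν x ≠ 1 → x ∈ N) := by
    intro τ
    by_cases hτ : τ ∈ 𝒯
    · obtain ⟨N, h1, h2, h3⟩ := GhysAux.exists_badset ν hqi hτ
      exact ⟨N, h1, h2, fun _ => h3⟩
    · exact ⟨∅, MeasurableSet.empty, measure_empty, fun h => absurd h hτ⟩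
  choose N hNm hN0 hNb using hbad
  set M : Set α := ⋃ τ ∈ 𝒯, N τ with hMdef
  have hMm : MeasurableSet M := MeasurableSet.biUnion hcount fun τ _ => hNm τ
  have hM0 : ν M = 0 := (measure_biUnion_null_iff hcount).2 fun τ _ => hN0 τ
  set M' : Set α := M ∪ ⋃ τ ∈ 𝒯, τ.toFun '' (M ∩ τ.source) with hM'def
  have hM'm : MeasurableSet M' :=
    hMm.union (MeasurableSet.biUnion hcount fun τ _ =>
      τ.measurable_image _ (hMm.inter τ.source_measurable) inter_subset_right)
  have hM'0 : ν M' = 0 := by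
    refine measure_union_null hM0 ((measure_biUnion_null_iff hcount).2 fun τ hτ => ?_)
    exact (hqi τ hτ _ (hMm.inter τ.source_measurable) inter_subset_right).mp
      (measure_mono_null inter_subset_left hM0)
  have hMM' : M ⊆ M' := subset_union_left
  have hkey : ∀ σ ∈ 𝒯, σ.toFun '' (M' ∩ σ.source) ⊆ M' := by
    rintro σ hσ y ⟨x, ⟨hxM', hxs⟩, rfl⟩
    rcases hxM' with hxM | hxI
    · exact Or.inr (mem_biUnion hσ ⟨x, ⟨hxM, hxs⟩, rfl⟩)
    · rcases mem_iUnion₂.mp hxI with ⟨τ, hτ, hxτ⟩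
      obtain ⟨w, ⟨hwM, hws⟩, rfl⟩ := hxτ
      obtain ⟨ρ, hρ, hρsrc, hρfun⟩ := hcomp τ hτ σ hσ
      have hwρ : w ∈ ρ.source := by rw [hρsrc]; exact ⟨hws, hxs⟩
      refine Or.inr (mem_biUnion hρ ⟨w, ⟨hwM, hwρ⟩, hρfun w hwρ⟩)
  have hkey' : ∀ σ ∈ 𝒯, σ.invFun '' (M' ∩ σ.target) ⊆ M' := fun σ hσ =>
    hkey σ.symm (hinv σ hσ)
  have hsat : Saturated 𝒯 M'ᶜ := by
    intro σ hσ
    constructor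
    · rintro y ⟨x, ⟨hxc, hxs⟩, rfl⟩ hyM'
      apply hxc
      have h := hkey' σ hσ ⟨σ.toFun x, ⟨hyM', σ.mapsTo hxs⟩, rfl⟩
      rwa [σ.left_inv x hxs] at h
    · rintro y ⟨x, ⟨hxc, hxt⟩, rfl⟩ hyM'
      apply hxc
      have h := hkey σ hσ ⟨σ.invFun x, ⟨hyM', σ.inv_mapsTo hxt⟩, rfl⟩
      rwa [σ.right_inv x hxt] at h
  refine ⟨M'ᶜ, hM'm.compl, by rwa [compl_compl], hsat, ?_⟩
  intro x hx τ hτ hxs hfix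
  by_contra hne
  exact hx (hMM' (mem_biUnion hτ (hNb τ hτ x hxs hfix hne)))
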